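/- Let X be a complex Banach space, 𝕁 ∈ {ℝ, [0,∞)}, and let 𝓕 be a set of functions 𝕁 → X satisfying: (6.2) 𝓕 is a linear subspace of the locally Bochner integrable functions 𝕁 → X; (6.3) if φ_n ∈ 𝓕 are bounded and uniformly continuous and φ_n → ψ uniformly on 𝕁, then ψ ∈ 𝓕; (6.4) if φ : ℝ → X is bounded and uniformly continuous with φ|𝕁 ∈ 𝓕, then the translate φ(a + ·)|𝕁 ∈ 𝓕 for every a ∈ ℝ; (6.5) if B ∈ L(X) and φ : ℝ → X is bounded and uniformly continuous with φ|𝕁 ∈ 𝓕, then (B∘φ)|𝕁 ∈ 𝓕. Let φ ∈ L^∞(ℝ, X) be such that (M_h φ)|𝕁 ∈ 𝓕 for every h > 0, where (M_h φ)(t) := (1/h)∫_0^h φ(t+s) ds, and let F ∈ L¹(ℝ, L(X)). Then F*φ is bounded and uniformly continuous on ℝ and (F*φ)|𝕁 ∈ 𝓕. -/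

import Mathlib

open MeasureTheory Filter Complex

section Helpers

variable {X : Type*} [NormedAddCommGroup X] [NormedSpace ℂ X] [CompleteSpace X]

/-- Uniform continuity from a Lipschitz-type bound. -/
lemma uc_of_lipbound {f : ℝ → X} {K : ℝ}
    (h : ∀ a b : ℝ, ‖f a - f b‖ ≤ K * |a - b|) : UniformContinuous f := by
  rw [Metric.uniformContinuous_iff]
  intro ε hε
  refine ⟨ε / (max K 0 + 1), by positivity, fun {a b} hab => ?_⟩
  have hM : (0:ℝ) < max K 0 + 1 := by positivity
  have h1 : ‖f a - f b‖ ≤ max K 0 * |a - b| :=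
    (h a b).trans (mul_le_mul_of_nonneg_right (le_max_left _ _) (abs_nonneg _))
  have h2 : |a - b| < ε / (max K 0 + 1) := by rwa [Real.dist_eq] at hab
  have h3 : max K 0 * |a - b| ≤ max K 0 * (ε / (max K 0 + 1)) :=
    mul_le_mul_of_nonneg_left h2.le (le_max_right _ _)
  have h4 : max K 0 * (ε / (max K 0 + 1)) < ε := by
    rw [div_eq_inv_mul, ← mul_assoc]
    have : max K 0 * (max K 0 + 1)⁻¹ < 1 := by
      rw [mul_inv_lt_iff₀ hM]; linarith [le_max_right K 0]
    nlinarith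
  rw [dist_eq_norm]
  exact lt_of_le_of_lt (h1.trans h3) h4

/-- A uniform limit of uniformly continuous functions is uniformly continuous. -/
lemma uc_of_unif_limit {fn : ℕ → ℝ → X} {f : ℝ → X}
    (hfn : ∀ n, UniformContinuous (fn n))
    (hlim : TendstoUniformly fn f atTop) : UniformContinuous f := by
  rw [Metric.uniformContinuous_iff]
  intro ε hε
  rw [Metric.tendstoUniformly_iff] at hlim
  obtain ⟨n, hn⟩ := (hlim (ε / 3) (by positivity)).exists
  obtain ⟨δ, hδ, hδ'⟩ := (Metric.uniformContinuous_iff.1 (hfn n)) (ε / 3) (by positivity)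
  refine ⟨δ, hδ, fun {a b} hab => ?_⟩
  have h1 := hn a
  have h2 := hn b
  have h3 := hδ' hab
  have h2' : dist (fn n b) (f b) < ε / 3 := by rw [dist_comm]; exact h2
  have h4 := dist_triangle4 (f a) (fn n a) (fn n b) (f b)
  linarith

/-- Uniform continuity of a finite sum of functions. -/
lemma uc_finset_sum {ι : Type*} (s : Finset ι) (f : ι → ℝ → X)
    (h : ∀ i ∈ s, UniformContinuous (f i)) :
    UniformContinuous (fun t => ∑ i ∈ s, f i t) := by
  classical
  induction s using Finset.induction with
  | empty => simpa using uniformContinuous_const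
  | insert _ _ hi ih =>
      simp only [Finset.sum_insert hi]
      exact (h _ (Finset.mem_insert_self _ _)).add
        (ih fun i his => h i (Finset.mem_insert_of_mem his))

variable {φ' : ℝ → X} {C : ℝ}

/-- A bounded strongly measurable function is interval integrable. -/
lemma bd_intervalIntegrable (hm : StronglyMeasurable φ') (hb : ∀ x, ‖φ' x‖ ≤ C)
    (a b : ℝ) : IntervalIntegrable φ' volume a b := by
  rw [intervalIntegrable_iff]
  refine Integrable.mono' (integrableOn_const measure_Ioc_lt_top.ne)
    hm.aestronglyMeasurable.restrict (Eventually.of_forall fun x => hb x)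

/-- Norm bound for the mean. -/
lemma mean_bound (hm : StronglyMeasurable φ') (hb : ∀ x, ‖φ' x‖ ≤ C)
    {δ : ℝ} (hδ : 0 < δ) (t : ℝ) :
    ‖(1 / δ) • ∫ u in (0:ℝ)..δ, φ' (t + u)‖ ≤ C := by
  have h1 : ‖∫ u in (0:ℝ)..δ, φ' (t + u)‖ ≤ C * |δ - 0| :=
    intervalIntegral.norm_integral_le_of_norm_le_const fun x _ => hb _
  rw [norm_smul, norm_div, norm_one, Real.norm_eq_abs, abs_of_pos hδ]
  calc (1 / δ) * ‖∫ u in (0:ℝ)..δ, φ' (t + u)‖ ≤ (1 / δ) * (C * |δ - 0|) := by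
        apply mul_le_mul_of_nonneg_left h1; positivity
    _ = C := by
        rw [sub_zero, abs_of_pos hδ]; field_simp

/-- Lipschitz bound for the mean. -/
lemma mean_lip (hm : StronglyMeasurable φ') (hb : ∀ x, ‖φ' x‖ ≤ C)
    {δ : ℝ} (hδ : 0 < δ) (t₁ t₂ : ℝ) :
    ‖((1 / δ) • ∫ u in (0:ℝ)..δ, φ' (t₁ + u)) -
      ((1 / δ) • ∫ u in (0:ℝ)..δ, φ' (t₂ + u))‖ ≤ (2 * C / δ) * |t₁ - t₂| := by
  have hii : ∀ a b : ℝ, IntervalIntegrable φ' volume a b := bd_intervalIntegrable hm hb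
  have e1 : (∫ u in (0:ℝ)..δ, φ' (t₁ + u)) = ∫ u in t₁..t₁ + δ, φ' u := by
    simpa using intervalIntegral.integral_comp_add_left φ' t₁
  have e2 : (∫ u in (0:ℝ)..δ, φ' (t₂ + u)) = ∫ u in t₂..t₂ + δ, φ' u := by
    simpa using intervalIntegral.integral_comp_add_left φ' t₂
  have a1 : (∫ u in t₁..t₂, φ' u) + (∫ u in t₂..t₁ + δ, φ' u) = ∫ u in t₁..t₁ + δ, φ' u :=
    intervalIntegral.integral_add_adjacent_intervals (hii _ _) (hii _ _)
  have a2 : (∫ u in t₂..t₂ + δ, φ' u) + (∫ u in t₂ + δ..t₁ + δ, φ' u) = ∫ u in t₂..t₁ + δ, φ' u :=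
    intervalIntegral.integral_add_adjacent_intervals (hii _ _) (hii _ _)
  have key : (∫ u in t₁..t₁ + δ, φ' u) - (∫ u in t₂..t₂ + δ, φ' u)
      = (∫ u in t₁..t₂, φ' u) + (∫ u in t₂ + δ..t₁ + δ, φ' u) := by
    rw [← a1, ← a2]; abel
  have n1 : ‖∫ u in t₁..t₂, φ' u‖ ≤ C * |t₂ - t₁| :=
    intervalIntegral.norm_integral_le_of_norm_le_const fun x _ => hb _
  have n2 : ‖∫ u in t₂ + δ..t₁ + δ, φ' u‖ ≤ C * |t₁ + δ - (t₂ + δ)| :=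
    intervalIntegral.norm_integral_le_of_norm_le_const fun x _ => hb _
  rw [e1, e2, ← smul_sub, norm_smul, norm_div, norm_one, Real.norm_eq_abs, abs_of_pos hδ, key]
  have hC0 : 0 ≤ C := le_trans (norm_nonneg _) (hb 0)
  calc (1 / δ) * ‖(∫ u in t₁..t₂, φ' u) + (∫ u in t₂ + δ..t₁ + δ, φ' u)‖
      ≤ (1 / δ) * (C * |t₂ - t₁| + C * |t₁ + δ - (t₂ + δ)|) := by
        apply mul_le_mul_of_nonneg_left _ (by positivity)
        exact (norm_add_le _ _).trans (add_le_add n1 n2)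
    _ = (2 * C / δ) * |t₁ - t₂| := by
        rw [abs_sub_comm t₂ t₁]
        have : t₁ + δ - (t₂ + δ) = t₁ - t₂ := by ring
        rw [this]; field_simp; ring

end Helpers
section Helpers2

variable {X : Type*} [NormedAddCommGroup X] [NormedSpace ℂ X] [CompleteSpace X]
variable {φ' : ℝ → X} {C : ℝ}

/-- Integrability of the convolution integrand. -/
lemma conv_integrable (hm : StronglyMeasurable φ') (hb : ∀ x, ‖φ' x‖ ≤ C)
    {G : ℝ → X →L[ℂ] X} (hG : Integrable G (volume : Measure ℝ)) (t : ℝ) :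
    Integrable (fun s => G s (φ' (t - s))) (volume : Measure ℝ) := by
  have hmeas : AEStronglyMeasurable (fun s => φ' (t - s)) (volume : Measure ℝ) :=
    (hm.comp_measurable (measurable_const.sub measurable_id)).aestronglyMeasurable
  have h1 : AEStronglyMeasurable (fun s => G s (φ' (t - s))) (volume : Measure ℝ) := by
    have := (ContinuousLinearMap.id ℂ (X →L[ℂ] X)).aestronglyMeasurable_comp₂
      hG.aestronglyMeasurable hmeas
    simpa using this
  refine Integrable.mono' (hG.norm.mul_const C) h1 (Eventually.of_forall fun s => ?_)
  calc ‖G s (φ' (t - s))‖ ≤ ‖G s‖ * ‖φ' (t - s)‖ := (G s).le_opNorm _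
    _ ≤ ‖G s‖ * C := mul_le_mul_of_nonneg_left (hb _) (norm_nonneg _)

/-- Norm bound for the convolution. -/
lemma conv_bound (hm : StronglyMeasurable φ') (hb : ∀ x, ‖φ' x‖ ≤ C)
    {G : ℝ → X →L[ℂ] X} (hG : Integrable G (volume : Measure ℝ)) (t : ℝ) :
    ‖∫ s : ℝ, G s (φ' (t - s))‖ ≤ (∫ s : ℝ, ‖G s‖) * C := by
  rw [← integral_mul_const]
  refine norm_integral_le_of_norm_le (hG.norm.mul_const C) (Eventually.of_forall fun s => ?_)
  calc ‖G s (φ' (t - s))‖ ≤ ‖G s‖ * ‖φ' (t - s)‖ := (G s).le_opNorm _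
    _ ≤ ‖G s‖ * C := mul_le_mul_of_nonneg_left (hb _) (norm_nonneg _)

/-- Step functions built from interval indicators of operators. -/
noncomputable def stepFun (δ : ℝ) (n : ℕ) (B : ℤ → (X →L[ℂ] X)) : ℝ → (X →L[ℂ] X) :=
  fun s => ∑ k ∈ Finset.Icc (-(n:ℤ)) (n:ℤ),
    Set.indicator (Set.Ico ((k:ℝ) * δ) (((k:ℝ) + 1) * δ)) (fun _ => B k) s

lemma stepFun_integrable (δ : ℝ) (n : ℕ) (B : ℤ → (X →L[ℂ] X)) :
    Integrable (stepFun δ n B) (volume : Measure ℝ) := by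
  unfold stepFun
  refine integrable_finset_sum _ (f := fun (k : ℤ) (s : ℝ) => Set.indicator (Set.Ico ((k:ℝ) * δ) (((k:ℝ) + 1) * δ)) (fun _ => B k) s) ?_
  intro k _
  exact (integrable_indicator_iff measurableSet_Ico).2
    (integrableOn_const (C := B k) measure_Ico_lt_top.ne)

/-- The convolution of a step function with `φ'` is an explicit finite sum of means. -/
lemma conv_step (hm : StronglyMeasurable φ') (hb : ∀ x, ‖φ' x‖ ≤ C)
    {δ : ℝ} (hδ : 0 < δ) (n : ℕ) (B : ℤ → (X →L[ℂ] X)) (t : ℝ) :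
    ∫ s : ℝ, (stepFun δ n B) s (φ' (t - s))
      = ∑ k ∈ Finset.Icc (-(n:ℤ)) (n:ℤ),
        (δ:ℝ) • (B k) ((1 / δ) • ∫ u in (0:ℝ)..δ, φ' ((t - ((k:ℝ) + 1) * δ) + u)) := by
  have hC0 : 0 ≤ C := le_trans (norm_nonneg _) (hb 0)
  have hmeas : AEStronglyMeasurable (fun s => φ' (t - s)) (volume : Measure ℝ) :=
    (hm.comp_measurable (measurable_const.sub measurable_id)).aestronglyMeasurable
  -- rewrite each summand as an indicator of a function
  have hterm : ∀ k : ℤ, (fun s => (Set.indicator (Set.Ico ((k:ℝ) * δ) (((k:ℝ) + 1) * δ))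
        (fun _ => B k) s) (φ' (t - s)))
      = Set.indicator (Set.Ico ((k:ℝ) * δ) (((k:ℝ) + 1) * δ)) (fun s => B k (φ' (t - s))) := by
    intro k
    funext s
    by_cases hs : s ∈ Set.Ico ((k:ℝ) * δ) (((k:ℝ) + 1) * δ)
    · rw [Set.indicator_of_mem hs, Set.indicator_of_mem hs]
    · rw [Set.indicator_of_notMem hs, Set.indicator_of_notMem hs,
        ContinuousLinearMap.zero_apply]
  have hint : ∀ k : ℤ, Integrable
      (Set.indicator (Set.Ico ((k:ℝ) * δ) (((k:ℝ) + 1) * δ)) (fun s => B k (φ' (t - s))))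
      (volume : Measure ℝ) := by
    intro k
    refine (integrable_indicator_iff measurableSet_Ico).2 ?_
    refine Integrable.mono' (g := fun _ => ‖B k‖ * C)
      (integrableOn_const measure_Ico_lt_top.ne)
      (((B k).continuous.comp_aestronglyMeasurable hmeas).restrict)
      (Eventually.of_forall fun s => ?_)
    calc ‖B k (φ' (t - s))‖ ≤ ‖B k‖ * ‖φ' (t - s)‖ := (B k).le_opNorm _
      _ ≤ ‖B k‖ * C := mul_le_mul_of_nonneg_left (hb _) (norm_nonneg _)
  have step1 : ∫ s : ℝ, (stepFun δ n B) s (φ' (t - s))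
      = ∑ k ∈ Finset.Icc (-(n:ℤ)) (n:ℤ), ∫ s : ℝ,
          Set.indicator (Set.Ico ((k:ℝ) * δ) (((k:ℝ) + 1) * δ)) (fun s => B k (φ' (t - s))) s := by
    rw [← integral_finset_sum _ (fun k hk => hint k)]
    congr 1
    funext s
    simp only [stepFun, ContinuousLinearMap.sum_apply]
    exact Finset.sum_congr rfl fun k _ => by rw [← hterm k]
  rw [step1]
  refine Finset.sum_congr rfl fun k _ => ?_
  have hab : (k:ℝ) * δ ≤ ((k:ℝ) + 1) * δ := by nlinarith
  have hii : IntervalIntegrable (fun s => φ' (t - s)) volume ((k:ℝ) * δ) (((k:ℝ) + 1) * δ) := by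
    rw [intervalIntegrable_iff]
    exact Integrable.mono' (integrableOn_const measure_Ioc_lt_top.ne)
      hmeas.restrict (Eventually.of_forall fun x => hb _)
  calc ∫ s : ℝ, Set.indicator (Set.Ico ((k:ℝ) * δ) (((k:ℝ) + 1) * δ))
        (fun s => B k (φ' (t - s))) s
      = ∫ s in Set.Ico ((k:ℝ) * δ) (((k:ℝ) + 1) * δ), B k (φ' (t - s)) :=
        integral_indicator measurableSet_Ico
    _ = ∫ s in Set.Ioc ((k:ℝ) * δ) (((k:ℝ) + 1) * δ), B k (φ' (t - s)) :=
        setIntegral_congr_set Ico_ae_eq_Ioc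
    _ = ∫ s in ((k:ℝ) * δ)..(((k:ℝ) + 1) * δ), B k (φ' (t - s)) :=
        (intervalIntegral.integral_of_le hab).symm
    _ = B k (∫ s in ((k:ℝ) * δ)..(((k:ℝ) + 1) * δ), φ' (t - s)) :=
        (B k).intervalIntegral_comp_comm hii
    _ = (δ:ℝ) • (B k) ((1 / δ) • ∫ u in (0:ℝ)..δ, φ' ((t - ((k:ℝ) + 1) * δ) + u)) := by
        rw [← (B k).map_smul_of_tower, smul_smul, mul_one_div, div_self hδ.ne', one_smul]
        congr 1
        rw [intervalIntegral.integral_comp_sub_left (fun u => φ' u) t]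
        rw [intervalIntegral.integral_comp_add_left φ' (t - ((k:ℝ) + 1) * δ)]
        congr 1
        · ring
        · ring

end Helpers2
section Helpers3

variable {X : Type*} [NormedAddCommGroup X] [NormedSpace ℂ X] [CompleteSpace X]

/-- A continuous compactly supported operator-valued function is approximated in `L¹`
by step functions. -/
lemma step_approx (G : ℝ → X →L[ℂ] X) (hGc : Continuous G) (hGs : HasCompactSupport G)
    {ε : ℝ} (hε : 0 < ε) :
    ∃ δ : ℝ, 0 < δ ∧ ∃ n : ℕ, ∃ B : ℤ → (X →L[ℂ] X),
      (∫ s : ℝ, ‖G s - stepFun δ n B s‖) ≤ ε := by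
  obtain ⟨r, hr⟩ := hGs.isBounded.subset_closedBall 0
  set R : ℝ := max r 0 with hR
  have hR0 : 0 ≤ R := le_max_right _ _
  have hGz : ∀ s : ℝ, R < |s| → G s = 0 := by
    intro s hs
    apply image_eq_zero_of_notMem_tsupport
    intro hmem
    have := hr hmem
    rw [Real.closedBall_eq_Icc, zero_sub, zero_add] at this
    have h1 : |s| ≤ r := abs_le.2 ⟨this.1, this.2⟩
    exact absurd (h1.trans (le_max_left r 0)) (not_le.2 hs)
  set ε' : ℝ := ε / (2 * R + 4) with hε'
  have hε'0 : 0 < ε' := by positivity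
  obtain ⟨δ₀, hδ₀, hδ₀'⟩ := Metric.uniformContinuous_iff.1
    (hGs.uniformContinuous_of_continuous hGc) ε' hε'0
  set δ : ℝ := min δ₀ 1 / 2 with hδdef
  have hδ : 0 < δ := by positivity
  have hδ1 : δ ≤ 1 := by
    rw [hδdef]; have := min_le_right δ₀ 1; linarith
  have hδ0' : δ < δ₀ := by
    rw [hδdef]; have := min_le_left δ₀ 1; linarith
  set n : ℕ := ⌈(R + 1) / δ⌉₊ with hn
  have hnδ : R + 1 ≤ (n:ℝ) * δ := by
    rw [hn]
    have := Nat.le_ceil ((R + 1) / δ)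
    rw [div_le_iff₀ hδ] at this
    exact this
  set B : ℤ → (X →L[ℂ] X) := fun k => G ((k:ℝ) * δ) with hB
  refine ⟨δ, hδ, n, B, ?_⟩
  -- pointwise bound
  have key : ∀ s : ℝ, ‖G s - stepFun δ n B s‖
      ≤ Set.indicator (Set.Icc (-(R + 2)) (R + 2)) (fun _ => ε') s := by
    intro s
    set k₀ : ℤ := ⌊s / δ⌋ with hk₀
    have hmem_iff : ∀ k : ℤ, s ∈ Set.Ico ((k:ℝ) * δ) (((k:ℝ) + 1) * δ) ↔ k = k₀ := by
      intro k
      constructor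
      · rintro ⟨h1, h2⟩
        have hfl : ⌊s / δ⌋ = k := by
          rw [Int.floor_eq_iff]
          refine ⟨(le_div_iff₀ hδ).2 h1, ?_⟩
          rw [div_lt_iff₀ hδ]
          push_cast
          exact h2
        rw [hk₀, ← hfl]
      · rintro rfl
        constructor
        · rw [← le_div_iff₀ hδ]
          exact Int.floor_le _
        · rw [← div_lt_iff₀ hδ]
          push_cast
          exact Int.lt_floor_add_one _
    have hfloor_lb : (k₀:ℝ) * δ ≤ s := by
      rw [← le_div_iff₀ hδ]; exact Int.floor_le _
    have hfloor_ub : s < ((k₀:ℝ) + 1) * δ := by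
      rw [← div_lt_iff₀ hδ]; push_cast; exact Int.lt_floor_add_one _
    by_cases hk₀mem : k₀ ∈ Finset.Icc (-(n:ℤ)) (n:ℤ)
    · -- step value is G (k₀ δ)
      have hstep : stepFun δ n B s = B k₀ := by
        rw [stepFun]
        rw [Finset.sum_eq_single_of_mem k₀ hk₀mem]
        · exact Set.indicator_of_mem ((hmem_iff k₀).2 rfl) _
        · intro k _ hk
          exact Set.indicator_of_notMem (fun hmem => hk ((hmem_iff k).1 hmem)) _
      rw [hstep]
      have hdist : dist s ((k₀:ℝ) * δ) < δ₀ := by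
        rw [Real.dist_eq, _root_.abs_of_nonneg (by linarith)]
        nlinarith
      by_cases hs : s ∈ Set.Icc (-(R + 2)) (R + 2)
      · rw [Set.indicator_of_mem hs]
        have := hδ₀' hdist
        rw [dist_eq_norm] at this
        exact this.le
      · rw [Set.indicator_of_notMem hs]
        have habs : R + 2 < |s| := by
          rw [Set.mem_Icc, not_and_or, not_le, not_le] at hs
          rcases hs with h | h
          · rw [_root_.abs_of_neg (by linarith)]; linarith
          · rw [_root_.abs_of_pos (by linarith)]; linarith
        have hG0 : G s = 0 := hGz s (by linarith)
        have hB0 : B k₀ = 0 := by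
          rw [hB]
          apply hGz
          have h1 : |s - (k₀:ℝ) * δ| ≤ 1 := by
            rw [_root_.abs_of_nonneg (by linarith)]; nlinarith
          have := abs_sub_abs_le_abs_sub s ((k₀:ℝ) * δ)
          linarith
        rw [hG0, hB0, sub_zero, norm_zero]
    · -- outside: both are zero
      have hstep : stepFun δ n B s = 0 := by
        rw [stepFun]
        apply Finset.sum_eq_zero
        intro k hk
        refine Set.indicator_of_notMem (fun hmem => hk₀mem ?_) _
        rw [(hmem_iff k).1 hmem] at hk
        exact hk
      have hG0 : G s = 0 := by
        rw [Finset.mem_Icc, not_and_or, not_le, not_le] at hk₀mem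
        apply hGz
        rcases hk₀mem with h | h
        · -- k₀ < -n : s < (k₀+1) δ ≤ -n δ ≤ -(R+1)
          have h1 : (k₀:ℝ) + 1 ≤ -(n:ℝ) := by exact_mod_cast Int.lt_iff_add_one_le.1 h
          have h2 : ((k₀:ℝ) + 1) * δ ≤ -(n:ℝ) * δ := by nlinarith
          have h3 : s < -(R + 1) := by nlinarith
          rw [_root_.abs_of_neg (by linarith)]; linarith
        · -- n < k₀ : s ≥ k₀ δ ≥ (n+1) δ ≥ R+1
          have h1 : (n:ℝ) + 1 ≤ (k₀:ℝ) := by exact_mod_cast Int.lt_iff_add_one_le.1 h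
          have h2 : ((n:ℝ) + 1) * δ ≤ (k₀:ℝ) * δ := by nlinarith
          have h3 : R + 1 ≤ s := by nlinarith
          rw [_root_.abs_of_pos (by linarith)]; linarith
      rw [hstep, hG0, sub_zero, norm_zero]
      exact Set.indicator_nonneg (fun _ _ => hε'0.le) s
  -- integrate the pointwise bound
  have hGint : Integrable G (volume : Measure ℝ) := hGc.integrable_of_hasCompactSupport hGs
  have hsint : Integrable (stepFun δ n B) (volume : Measure ℝ) := stepFun_integrable δ n B
  have hlhs : Integrable (fun s => ‖G s - stepFun δ n B s‖) (volume : Measure ℝ) :=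
    (hGint.sub hsint).norm
  have hrhs : Integrable (Set.indicator (Set.Icc (-(R + 2)) (R + 2)) (fun _ => ε'))
      (volume : Measure ℝ) :=
    (integrable_indicator_iff measurableSet_Icc).2
      (integrableOn_const measure_Icc_lt_top.ne)
  calc (∫ s : ℝ, ‖G s - stepFun δ n B s‖)
      ≤ ∫ s : ℝ, Set.indicator (Set.Icc (-(R + 2)) (R + 2)) (fun _ => ε') s :=
        integral_mono hlhs hrhs key
    _ = (volume (Set.Icc (-(R + 2)) (R + 2))).toReal • ε' := integral_indicator_const _ measurableSet_Icc
    _ = ε := by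
        rw [Real.volume_Icc, smul_eq_mul]
        have h24 : (R + 2) - (-(R + 2)) = 2 * R + 4 := by ring
        rw [h24, ENNReal.toReal_ofReal (by linarith)]
        rw [hε']
        field_simp

end Helpers3
section Helpers4

variable {X : Type*} [NormedAddCommGroup X] [NormedSpace ℂ X] [CompleteSpace X]

/-- Any integrable operator-valued function is approximated in `L¹` by step functions. -/
lemma approx_by_step (F : ℝ → X →L[ℂ] X) (hF : Integrable F (volume : Measure ℝ))
    {ε : ℝ} (hε : 0 < ε) :
    ∃ δ : ℝ, 0 < δ ∧ ∃ n : ℕ, ∃ B : ℤ → (X →L[ℂ] X),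
      (∫ s : ℝ, ‖F s - stepFun δ n B s‖) ≤ ε := by
  obtain ⟨G, hGs, hG1, hGc, hGint⟩ :=
    hF.exists_hasCompactSupport_integral_sub_le (half_pos hε)
  obtain ⟨δ, hδ, n, B, hstep⟩ := step_approx G hGc hGs (half_pos hε)
  refine ⟨δ, hδ, n, B, ?_⟩
  have hsint : Integrable (stepFun δ n B) (volume : Measure ℝ) := stepFun_integrable δ n B
  have h1 : Integrable (fun s => ‖F s - G s‖ + ‖G s - stepFun δ n B s‖) (volume : Measure ℝ) :=
    (hF.sub hGint).norm.add (hGint.sub hsint).norm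
  calc (∫ s : ℝ, ‖F s - stepFun δ n B s‖)
      ≤ ∫ s : ℝ, (‖F s - G s‖ + ‖G s - stepFun δ n B s‖) := by
        refine integral_mono ((hF.sub hsint).norm) h1 (fun s => ?_)
        calc ‖F s - stepFun δ n B s‖ = ‖(F s - G s) + (G s - stepFun δ n B s)‖ := by abel_nf
          _ ≤ ‖F s - G s‖ + ‖G s - stepFun δ n B s‖ := norm_add_le _ _
    _ = (∫ s : ℝ, ‖F s - G s‖) + ∫ s : ℝ, ‖G s - stepFun δ n B s‖ :=
        integral_add (hF.sub hGint).norm (hGint.sub hsint).norm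
    _ ≤ ε / 2 + ε / 2 := add_le_add hG1 hstep
    _ = ε := by ring

end Helpers4
/-- **Lemma 6.1.** Let `𝕁 ∈ {ℝ, [0,∞)}` and let `𝓕` be a class
of functions `𝕁 → X` satisfying (6.2)–(6.5).  If `φ ∈ L^∞(ℝ, X)` with
`(M_h φ)|𝕁 ∈ 𝓕` for all `h > 0` and `F ∈ L¹(ℝ, L(X))`, then `F*φ` is bounded
and uniformly continuous on `ℝ` and `(F*φ)|𝕁 ∈ 𝓕`. -/
theorem stmt17 {X : Type*} [NormedAddCommGroup X] [NormedSpace ℂ X] [CompleteSpace X]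
    (J : Set ℝ) (hJ : J = Set.univ ∨ J = Set.Ici 0)
    (𝓕 : Set (J → X))
    -- (6.2) `𝓕` is a linear subspace of the locally Bochner integrable functions `𝕁 → X`
    (h62zero : (0 : J → X) ∈ 𝓕)
    (h62add : ∀ f ∈ 𝓕, ∀ g ∈ 𝓕, f + g ∈ 𝓕)
    (h62smul : ∀ f ∈ 𝓕, ∀ c : ℂ, c • f ∈ 𝓕)
    (h62loc : ∀ f ∈ 𝓕, ∀ K : Set ℝ, IsCompact K → K ⊆ J →
      IntegrableOn (Function.extend (Subtype.val : J → ℝ) f (fun _ => 0)) K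
        (volume : Measure ℝ))
    -- (6.3) uniform limits of bounded uniformly continuous members of `𝓕` lie in `𝓕`
    (h63 : ∀ (φn : ℕ → J → X) (ψ : J → X), (∀ n, φn n ∈ 𝓕) →
      (∀ n, (∃ C : ℝ, ∀ t : J, ‖φn n t‖ ≤ C) ∧ UniformContinuous (φn n)) →
      TendstoUniformly φn ψ atTop → ψ ∈ 𝓕)
    -- (6.4) BUC-invariance under translation
    (h64 : ∀ φ : ℝ → X, (∃ C : ℝ, ∀ t : ℝ, ‖φ t‖ ≤ C) → UniformContinuous φ →
      J.restrict φ ∈ 𝓕 → ∀ a : ℝ, J.restrict (fun t : ℝ => φ (a + t)) ∈ 𝓕)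
    -- (6.5) invariance under bounded operators
    (h65 : ∀ (B : X →L[ℂ] X) (φ : ℝ → X),
      (∃ C : ℝ, ∀ t : ℝ, ‖φ t‖ ≤ C) → UniformContinuous φ →
      J.restrict φ ∈ 𝓕 → J.restrict (fun t : ℝ => B (φ t)) ∈ 𝓕)
    (φ : ℝ → X) (hφ : MemLp φ ⊤ (volume : Measure ℝ))
    (hMh : ∀ h : ℝ, 0 < h →
      J.restrict (fun t : ℝ => (1 / h) • ∫ s in (0 : ℝ)..h, φ (t + s)) ∈ 𝓕)
    (F : ℝ → X →L[ℂ] X) (hF : Integrable F (volume : Measure ℝ)) :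
    (∃ C : ℝ, ∀ t : ℝ, ‖∫ s : ℝ, F s (φ (t - s))‖ ≤ C) ∧
    UniformContinuous (fun t : ℝ => ∫ s : ℝ, F s (φ (t - s))) ∧
    J.restrict (fun t : ℝ => ∫ s : ℝ, F s (φ (t - s))) ∈ 𝓕 := by
  classical
  -- a bounded strongly measurable representative of `φ`
  set C : ℝ := (eLpNormEssSup φ volume).toReal with hCdef
  have hC0 : 0 ≤ C := ENNReal.toReal_nonneg
  have hfin : eLpNormEssSup φ volume ≠ ⊤ := by
    have h2 := hφ.2
    rw [eLpNorm_exponent_top] at h2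
    exact h2.ne
  have haebd : ∀ᵐ x ∂(volume : Measure ℝ), ‖φ x‖ ≤ C := by
    filter_upwards [ae_le_eLpNormEssSup (f := φ) (μ := volume)] with x hx
    have h1 : ((‖φ x‖₊ : ENNReal)).toReal ≤ C := ENNReal.toReal_mono hfin hx
    simpa using h1
  set g : ℝ → X := (hφ.1).mk φ with hgdef
  have hg : StronglyMeasurable g := (hφ.1).stronglyMeasurable_mk
  have hφg : φ =ᵐ[volume] g := (hφ.1).ae_eq_mk
  set A : Set ℝ := {x | ‖g x‖ ≤ C} with hAdef
  have hA : MeasurableSet A := measurableSet_le hg.norm.measurable measurable_const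
  set φ' : ℝ → X := A.indicator g with hφ'def
  have hm : StronglyMeasurable φ' := hg.indicator hA
  have hb : ∀ x, ‖φ' x‖ ≤ C := by
    intro x
    by_cases hx : x ∈ A
    · rw [hφ'def, Set.indicator_of_mem hx]; exact hx
    · rw [hφ'def, Set.indicator_of_notMem hx, norm_zero]; exact hC0
  have hφφ' : φ =ᵐ[volume] φ' := by
    filter_upwards [haebd, hφg] with x h1 h2
    have hxA : x ∈ A := by rw [hAdef, Set.mem_setOf_eq, ← h2]; exact h1
    rw [hφ'def, Set.indicator_of_mem hxA, ← h2]
  -- the means of `φ` and `φ'` coincide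
  have hMean : ∀ δ : ℝ, 0 < δ → (fun t : ℝ => (1 / δ) • ∫ s in (0:ℝ)..δ, φ (t + s))
      = fun t : ℝ => (1 / δ) • ∫ s in (0:ℝ)..δ, φ' (t + s) := by
    intro δ hδ
    funext t
    congr 1
    apply intervalIntegral.integral_congr_ae
    have hmp : MeasurePreserving (fun s : ℝ => t + s) volume volume :=
      measurePreserving_add_left volume t
    filter_upwards [hmp.quasiMeasurePreserving.ae_eq hφφ'] with s hs _
    exact hs
  have hMh' : ∀ δ : ℝ, 0 < δ →
      J.restrict (fun t : ℝ => (1 / δ) • ∫ s in (0:ℝ)..δ, φ' (t + s)) ∈ 𝓕 := by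
    intro δ hδ
    have h1 := hMh δ hδ
    rwa [hMean δ hδ] at h1
  -- membership of the explicit step-convolutions in `𝓕`
  have hmemb : ∀ δ : ℝ, 0 < δ → ∀ (n : ℕ) (B : ℤ → X →L[ℂ] X),
      J.restrict (fun t : ℝ => ∑ k ∈ Finset.Icc (-(n:ℤ)) (n:ℤ),
        (δ:ℝ) • (B k) ((1 / δ) • ∫ u in (0:ℝ)..δ, φ' ((t - ((k:ℝ) + 1) * δ) + u))) ∈ 𝓕 := by
    intro δ hδ n B
    have hmUC : UniformContinuous (fun t : ℝ => (1 / δ) • ∫ u in (0:ℝ)..δ, φ' (t + u)) :=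
      uc_of_lipbound (K := 2 * C / δ) (fun a b => mean_lip hm hb hδ a b)
    have hmBd : ∀ t : ℝ, ‖(1 / δ) • ∫ u in (0:ℝ)..δ, φ' (t + u)‖ ≤ C :=
      fun t => mean_bound hm hb hδ t
    have hterm : ∀ k : ℤ, J.restrict (fun t : ℝ =>
        (δ:ℝ) • (B k) ((1 / δ) • ∫ u in (0:ℝ)..δ, φ' ((t - ((k:ℝ) + 1) * δ) + u))) ∈ 𝓕 := by
      intro k
      set a : ℝ := -(((k:ℝ) + 1) * δ) with hadef
      have h1 : J.restrict (fun t : ℝ => (1 / δ) • ∫ u in (0:ℝ)..δ, φ' ((a + t) + u)) ∈ 𝓕 :=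
        h64 _ ⟨C, hmBd⟩ hmUC (hMh' δ hδ) a
      have hUC2 : UniformContinuous (fun t : ℝ => (1 / δ) • ∫ u in (0:ℝ)..δ, φ' ((a + t) + u)) :=
        hmUC.comp (uniformContinuous_const.add uniformContinuous_id)
      have h2 : J.restrict (fun t : ℝ =>
          (B k) ((1 / δ) • ∫ u in (0:ℝ)..δ, φ' ((a + t) + u))) ∈ 𝓕 :=
        h65 (B k) _ ⟨C, fun t => hmBd (a + t)⟩ hUC2 h1
      have h3 := h62smul _ h2 (δ : ℂ)
      have heq : (δ : ℂ) • J.restrict (fun t : ℝ =>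
          (B k) ((1 / δ) • ∫ u in (0:ℝ)..δ, φ' ((a + t) + u)))
          = J.restrict (fun t : ℝ =>
          (δ:ℝ) • (B k) ((1 / δ) • ∫ u in (0:ℝ)..δ, φ' ((t - ((k:ℝ) + 1) * δ) + u))) := by
        funext x
        simp only [Pi.smul_apply, Set.restrict, Set.domRestrict_apply, Complex.coe_smul]
        have hax : a + (x:ℝ) = (x:ℝ) - ((k:ℝ) + 1) * δ := by rw [hadef]; ring
        rw [hax]
      rwa [heq] at h3
    have hsum : J.restrict (fun t : ℝ => ∑ k ∈ Finset.Icc (-(n:ℤ)) (n:ℤ),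
        (δ:ℝ) • (B k) ((1 / δ) • ∫ u in (0:ℝ)..δ, φ' ((t - ((k:ℝ) + 1) * δ) + u)))
        = ∑ k ∈ Finset.Icc (-(n:ℤ)) (n:ℤ), J.restrict (fun t : ℝ =>
        (δ:ℝ) • (B k) ((1 / δ) • ∫ u in (0:ℝ)..δ, φ' ((t - ((k:ℝ) + 1) * δ) + u))) := by
      funext x
      simp [Set.restrict, Set.domRestrict_apply, Finset.sum_apply]
    rw [hsum]
    exact Finset.sum_induction _ (· ∈ 𝓕) (fun f g hf hg => h62add f hf g hg) h62zero
      (fun k _ => hterm k)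
  -- the goal function equals the convolution with `φ'`
  have hgoal_eq : ∀ t : ℝ, (∫ s : ℝ, F s (φ (t - s))) = ∫ s : ℝ, F s (φ' (t - s)) := by
    intro t
    apply integral_congr_ae
    have hmp : MeasurePreserving (fun s : ℝ => t - s) volume volume := by
      have h1 := (measurePreserving_add_left (volume : Measure ℝ) t).comp
        (Measure.measurePreserving_neg (volume : Measure ℝ))
      simpa [Function.comp_def, sub_eq_add_neg] using h1
    filter_upwards [hmp.quasiMeasurePreserving.ae_eq hφφ'] with s hs
    exact congrArg (F s) hs
  -- choose approximating step functions
  have hchoice : ∀ n : ℕ, ∃ δ : ℝ, 0 < δ ∧ ∃ N : ℕ, ∃ B : ℤ → (X →L[ℂ] X),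
      (∫ s : ℝ, ‖F s - stepFun δ N B s‖) ≤ 1 / ((n:ℝ) + 1) := fun n =>
    approx_by_step F hF (by positivity)
  choose δn hδn Nn Bn hBn using hchoice
  set S : ℕ → ℝ → X := fun n t => ∑ k ∈ Finset.Icc (-(Nn n : ℤ)) (Nn n : ℤ),
      (δn n : ℝ) • (Bn n k)
        ((1 / δn n) • ∫ u in (0:ℝ)..(δn n), φ' ((t - ((k:ℝ) + 1) * δn n) + u)) with hSdef
  have hSmem : ∀ n, J.restrict (S n) ∈ 𝓕 := fun n => hmemb _ (hδn n) _ _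
  have hSUC : ∀ n, UniformContinuous (S n) := by
    intro n
    apply uc_finset_sum
    intro k _
    have h1 : UniformContinuous (fun t : ℝ => (1 / δn n) • ∫ u in (0:ℝ)..(δn n), φ' (t + u)) :=
      uc_of_lipbound (K := 2 * C / δn n) (fun a b => mean_lip hm hb (hδn n) a b)
    have h2 : UniformContinuous (fun t : ℝ => t - ((k:ℝ) + 1) * δn n) :=
      uniformContinuous_id.sub uniformContinuous_const
    exact ((Bn n k).uniformContinuous.comp (h1.comp h2)).const_smul (δn n)
  have hSbd : ∀ n, ∃ D : ℝ, ∀ t : ℝ, ‖S n t‖ ≤ D := by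
    intro n
    refine ⟨∑ k ∈ Finset.Icc (-(Nn n : ℤ)) (Nn n : ℤ), |δn n| * (‖Bn n k‖ * C), fun t => ?_⟩
    refine (norm_sum_le _ _).trans (Finset.sum_le_sum fun k _ => ?_)
    rw [norm_smul, Real.norm_eq_abs]
    refine mul_le_mul_of_nonneg_left ?_ (abs_nonneg _)
    exact ((Bn n k).le_opNorm _).trans
      (mul_le_mul_of_nonneg_left (mean_bound hm hb (hδn n) _) (norm_nonneg _))
  have hSapprox : ∀ n t, ‖(∫ s : ℝ, F s (φ' (t - s))) - S n t‖ ≤ C / ((n:ℝ) + 1) := by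
    intro n t
    have hconv := conv_step hm hb (hδn n) (Nn n) (Bn n) t
    simp only [hSdef]
    rw [← hconv]
    have hstepint := stepFun_integrable (X := X) (δn n) (Nn n) (Bn n)
    have hsub : (∫ s : ℝ, F s (φ' (t - s))) - (∫ s : ℝ, stepFun (δn n) (Nn n) (Bn n) s (φ' (t - s)))
        = ∫ s : ℝ, (F - stepFun (δn n) (Nn n) (Bn n)) s (φ' (t - s)) := by
      have hfun : (fun s : ℝ => (F - stepFun (δn n) (Nn n) (Bn n)) s (φ' (t - s)))
          = fun s : ℝ => F s (φ' (t - s)) - stepFun (δn n) (Nn n) (Bn n) s (φ' (t - s)) := by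
        funext s
        simp [ContinuousLinearMap.sub_apply]
      rw [hfun, integral_sub (conv_integrable hm hb hF t) (conv_integrable hm hb hstepint t)]
    rw [hsub]
    have hbd := conv_bound hm hb (hF.sub hstepint) t
    refine hbd.trans ?_
    have hL1 : (∫ s : ℝ, ‖(F - stepFun (δn n) (Nn n) (Bn n)) s‖) ≤ 1 / ((n:ℝ) + 1) := by
      simpa [Pi.sub_apply] using hBn n
    calc (∫ s : ℝ, ‖(F - stepFun (δn n) (Nn n) (Bn n)) s‖) * C
        ≤ (1 / ((n:ℝ) + 1)) * C := mul_le_mul_of_nonneg_right hL1 hC0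
      _ = C / ((n:ℝ) + 1) := by ring
  have hSdist : ∀ n t, dist (∫ s : ℝ, F s (φ (t - s))) (S n t) ≤ C / ((n:ℝ) + 1) := by
    intro n t
    rw [dist_eq_norm, hgoal_eq t]
    exact hSapprox n t
  -- eventually small
  have hsmall : ∀ ε : ℝ, 0 < ε → ∀ᶠ n : ℕ in atTop, C / ((n:ℝ) + 1) < ε := by
    intro ε hε
    obtain ⟨N, hN⟩ := exists_nat_gt (C / ε)
    filter_upwards [eventually_ge_atTop N] with n hn
    have h1 : C < ε * ((N:ℝ) + 1) := by
      rw [div_lt_iff₀ hε] at hN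
      have : (0:ℝ) < ε := hε
      nlinarith
    have h2 : (N:ℝ) + 1 ≤ (n:ℝ) + 1 := by
      have : (N:ℝ) ≤ (n:ℝ) := by exact_mod_cast hn
      linarith
    rw [div_lt_iff₀ (by positivity)]
    nlinarith
  refine ⟨⟨(∫ s : ℝ, ‖F s‖) * C, fun t => ?_⟩, ?_, ?_⟩
  · rw [hgoal_eq t]
    exact conv_bound hm hb hF t
  · -- uniform continuity as a uniform limit
    refine uc_of_unif_limit (fn := S) hSUC ?_
    rw [Metric.tendstoUniformly_iff]
    intro ε hε
    filter_upwards [hsmall ε hε] with n hn t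
    exact lt_of_le_of_lt (hSdist n t) hn
  · -- membership in 𝓕
    refine h63 (fun n => J.restrict (S n)) _ hSmem (fun n => ?_) ?_
    · constructor
      · obtain ⟨D, hD⟩ := hSbd n
        exact ⟨D, fun t => hD t⟩
      · exact (hSUC n).comp uniformContinuous_subtype_val
    · rw [Metric.tendstoUniformly_iff]
      intro ε hε
      filter_upwards [hsmall ε hε] with n hn t
      exact lt_of_le_of_lt (hSdist n (t:ℝ)) hn
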